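/- Let k, k^h be reals with 0 < k < k^h, k^h − k < π/2, and suppose there is a positive integer n with (n−1)π < k < k^h < nπ. Define S₁ := (1/2)·sin(k^h−k)·(cot k − cot k^h) + cos(k^h−k) − sin(k^h−k)/(k^h−k). Then S₁ > (1/8)·(k^h−k)². -/

import Mathlib

open Real

-- sin x < x - x^3/8 for 0 < x < π/2
lemma sin_lt_sub_cube_eighth {x : ℝ} (hx : 0 < x) (hx2 : x < π / 2) :
    Real.sin x < x - x ^ 3 / 8 := by
  set t := x / 2 with ht
  have ht0 : 0 < t := by positivity
  have ht1 : t < π / 4 := by rw [ht]; linarith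
  have htle1 : t ≤ 1 := by
    have : π < 4 := by linarith [Real.pi_lt_d2]
    linarith
  have habs : |t| ≤ 1 := by rw [abs_of_pos ht0]; exact htle1
  have hsb := Real.sin_bound habs
  have hcb := Real.cos_bound habs
  rw [abs_of_pos ht0] at hsb hcb
  have hs : Real.sin t ≤ t - t ^ 3 / 6 + t ^ 4 * (5 / 96) := by
    have := abs_le.mp hsb
    nlinarith [this.2, pow_pos ht0 4, mul_le_mul_of_nonneg_left htle1 (pow_pos ht0 4).le]
  have hc : Real.cos t ≤ 1 - t ^ 2 / 2 + t ^ 4 * (5 / 96) := by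
    have := abs_le.mp hcb
    linarith [this.2]
  have hs0 : 0 < Real.sin t := Real.sin_pos_of_pos_of_lt_pi ht0 (by
    have : π > 3 := by linarith [Real.pi_gt_three]
    linarith)
  have hc0 : 0 < Real.cos t := Real.cos_pos_of_mem_Ioo ⟨by linarith, by
    have : π > 0 := Real.pi_pos
    linarith⟩
  have hx2t : x = 2 * t := by rw [ht]; ring
  have hsinx : Real.sin x = 2 * Real.sin t * Real.cos t := by
    rw [hx2t, Real.sin_two_mul]
  rw [hsinx, hx2t]
  have hmul : 2 * Real.sin t * Real.cos t ≤
      2 * (t - t ^ 3 / 6 + t ^ 4 * (5 / 96)) * (1 - t ^ 2 / 2 + t ^ 4 * (5 / 96)) := by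
    have h1 : 0 ≤ Real.sin t := le_of_lt hs0
    have h2 : 0 ≤ Real.cos t := le_of_lt hc0
    nlinarith [mul_le_mul hs hc h2 (by nlinarith)]
  have htlt : t < 0.7875 := by
    have : π < 3.15 := by linarith [Real.pi_lt_d2]
    linarith
  have key : 2 * (t - t ^ 3 / 6 + t ^ 4 * (5 / 96)) * (1 - t ^ 2 / 2 + t ^ 4 * (5 / 96))
      < 2 * t - (2 * t) ^ 3 / 8 := by
    nlinarith [pow_pos ht0 3, pow_pos ht0 5, mul_pos (pow_pos ht0 3) (mul_pos ht0 ht0),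
      mul_lt_mul_of_pos_left htlt (pow_pos ht0 3),
      mul_lt_mul_of_pos_left htlt (pow_pos ht0 4),
      mul_lt_mul_of_pos_left htlt (pow_pos ht0 5),
      mul_lt_mul_of_pos_left htlt (pow_pos ht0 6),
      mul_lt_mul_of_pos_left htlt (pow_pos ht0 7)]
  linarith

theorem S1_lower_bound (k kh : ℝ) (hk : 0 < k) (hkkh : k < kh)
    (hdiff : kh - k < π / 2) (n : ℕ) (hn : 0 < n)
    (h1 : ((n : ℝ) - 1) * π < k) (h2 : kh < (n : ℝ) * π) :
    (1 / 8) * (kh - k) ^ 2 <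
      (1 / 2) * Real.sin (kh - k) * (Real.cot k - Real.cot kh)
        + Real.cos (kh - k) - Real.sin (kh - k) / (kh - k) := by
  set d := kh - k with hd
  have hd0 : 0 < d := by simp [hd]; linarith
  have hπ : (0:ℝ) < π := Real.pi_pos
  set m : ℕ := n - 1 with hm
  have hmcast : ((m : ℝ)) = (n : ℝ) - 1 := by
    rw [hm]; push_cast [Nat.cast_sub hn]; ring
  set a : ℝ := k - ((n:ℝ) - 1) * π with ha
  set b : ℝ := kh - ((n:ℝ) - 1) * π with hb
  have ha0 : 0 < a := by rw [ha]; linarith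
  have hab : a < b := by rw [ha, hb]; linarith
  have hbπ : b < π := by rw [hb]; linarith
  have hsa : 0 < Real.sin a := Real.sin_pos_of_pos_of_lt_pi ha0 (by linarith)
  have hsb : 0 < Real.sin b := Real.sin_pos_of_pos_of_lt_pi (by linarith) hbπ
  have hka : k = a + (m : ℝ) * π := by rw [ha, hmcast]; ring
  have hkb : kh = b + (m : ℝ) * π := by rw [hb, hmcast]; ring
  have hsink : Real.sin k = (-1) ^ m * Real.sin a := by
    rw [hka, Real.sin_add_nat_mul_pi]
  have hsinkh : Real.sin kh = (-1) ^ m * Real.sin b := by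
    rw [hkb, Real.sin_add_nat_mul_pi]
  have hsq : ((-1 : ℝ) ^ m) ^ 2 = 1 := by
    rw [← pow_mul, mul_comm, pow_mul, neg_one_sq, one_pow]
  have hprod : Real.sin k * Real.sin kh = Real.sin a * Real.sin b := by
    rw [hsink, hsinkh]; linear_combination (Real.sin a * Real.sin b) * hsq
  have hP : 0 < Real.sin k * Real.sin kh := by rw [hprod]; positivity
  have hskne : Real.sin k ≠ 0 := by
    intro h; rw [h, zero_mul] at hP; exact lt_irrefl _ hP
  have hskhne : Real.sin kh ≠ 0 := by
    intro h; rw [h, mul_zero] at hP; exact lt_irrefl _ hP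
  have hcot : Real.cot k - Real.cot kh = Real.sin d / (Real.sin k * Real.sin kh) := by
    rw [Real.cot_eq_cos_div_sin, Real.cot_eq_cos_div_sin, hd, Real.sin_sub]
    field_simp
  have hub : 2 * (Real.sin k * Real.sin kh) ≤ 1 + Real.cos d := by
    have hid : 2 * (Real.sin k * Real.sin kh) = Real.cos d - Real.cos (kh + k) := by
      rw [hd, Real.cos_sub, Real.cos_add]; ring
    have := Real.neg_one_le_cos (kh + k)
    linarith
  have hsind : 0 < Real.sin d := Real.sin_pos_of_pos_of_lt_pi hd0 (by linarith)
  have hT1 : 1 - Real.cos d ≤ (1/2) * Real.sin d * (Real.sin d / (Real.sin k * Real.sin kh)) := by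
    have heq : (1/2) * Real.sin d * (Real.sin d / (Real.sin k * Real.sin kh))
        = (Real.sin d ^ 2) / (2 * (Real.sin k * Real.sin kh)) := by
      field_simp
    rw [heq, le_div_iff₀ (by linarith)]
    have hs2 : Real.sin d ^ 2 = 1 - Real.cos d ^ 2 := Real.sin_sq d
    have hc1 : Real.cos d ≤ 1 := Real.cos_le_one d
    nlinarith
  have hkey := sin_lt_sub_cube_eighth hd0 hdiff
  have hdiv : Real.sin d / d < 1 - d ^ 2 / 8 := by
    rw [div_lt_iff₀ hd0]; nlinarith
  rw [hcot]
  linarith [hT1, hdiv]
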